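/- Let G be a connected simple graph. If G contains no nontrivial even closed walk, then any two cycles of G have the same edge set (i.e., G contains at most one cycle up to the choice of starting point and orientation). -/

import Mathlib

open SimpleGraph

/-- A nontrivial even closed walk in a simple graph: a closed walk of positive even
length such that at least one edge occurs exactly once in its edge sequence and
every edge occurs at most twice in that edge sequence. -/
def IsNontrivialEvenClosedWalk {V : Type*} [DecidableEq V] {G : SimpleGraph V}
    {v : V} (w : G.Walk v v) : Prop :=
  0 < w.length ∧ Even w.length ∧
    (∃ e ∈ w.edges, w.edges.count e = 1) ∧
    (∀ e ∈ w.edges, w.edges.count e ≤ 2)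

/-- Helper: from any walk ending in `S`, extract a prefix walk that meets `S`
only at its final vertex. -/
lemma walk_prefix_to_set {V : Type*} {G : SimpleGraph V} (S : Set V) :
    ∀ {a b : V} (p : G.Walk a b), b ∈ S →
      ∃ (c : V) (_ : c ∈ S) (q : G.Walk a c),
        (∀ x ∈ q.support, x ∈ S → x = c) ∧
        (∀ x ∈ q.support, x ∈ p.support) ∧
        (∀ e ∈ q.edges, e ∈ p.edges) ∧ (p.IsTrail → q.IsTrail) := by
  intro a b p
  induction p with
  | nil =>
    intro hb
    exact ⟨_, hb, .nil, by simp, by simp, by simp, fun _ => .nil⟩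
  | @cons u w v huw p ih =>
    intro hb
    by_cases hu : u ∈ S
    · exact ⟨u, hu, .nil, by simp, by simp, by simp, fun _ => .nil⟩
    · obtain ⟨c, hc, q, H1, H2, H3, H4⟩ := ih hb
      refine ⟨c, hc, .cons huw q, ?_, ?_, ?_, ?_⟩
      · intro x hx hxS
        rw [Walk.support_cons] at hx
        rcases List.mem_cons.mp hx with rfl | hx'
        · exact absurd hxS hu
        · exact H1 x hx' hxS
      · intro x hx
        rw [Walk.support_cons] at hx
        rcases List.mem_cons.mp hx with rfl | hx'
        · simp
        · rw [Walk.support_cons]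
          exact List.mem_cons_of_mem _ (H2 x hx')
      · intro e he
        rw [Walk.edges_cons] at he ⊢
        rcases List.mem_cons.mp he with rfl | he'
        · simp
        · exact List.mem_cons_of_mem _ (H3 e he')
      · intro ht
        rw [Walk.isTrail_cons] at ht ⊢
        exact ⟨H4 ht.1, fun hmem => ht.2 (H3 _ hmem)⟩

/-- Helper: under the no-nontrivial-even-closed-walk hypothesis, every cycle has
odd length. -/
lemma cycle_length_odd {V : Type*} [DecidableEq V] {G : SimpleGraph V}
    (h : ¬ ∃ (v : V) (w : G.Walk v v), IsNontrivialEvenClosedWalk w)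
    {v : V} {w : G.Walk v v} (hw : w.IsCycle) : ¬ Even w.length := by
  intro heven
  apply h
  refine ⟨v, w, ?_, heven, ?_, ?_⟩
  · have := hw.three_le_length; omega
  · have hlen : w.edges ≠ [] := by
      intro hnil
      have := w.length_edges
      rw [hnil] at this
      have h3 := hw.three_le_length
      simp at this; omega
    obtain ⟨e, he⟩ := List.exists_mem_of_ne_nil _ hlen
    exact ⟨e, he, hw.isTrail.count_edges_eq_one he⟩
  · intro e he
    calc w.edges.count e ≤ 1 := hw.isTrail.count_edges_le_one e
    _ ≤ 2 := by omega

theorem stmt_4 {V : Type*} [DecidableEq V] (G : SimpleGraph V) (hG : G.Connected)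
    (h : ¬ ∃ (v : V) (w : G.Walk v v), IsNontrivialEvenClosedWalk w) :
    ∀ (u v : V) (w₁ : G.Walk u u) (w₂ : G.Walk v v),
      w₁.IsCycle → w₂.IsCycle → {e | e ∈ w₁.edges} = {e | e ∈ w₂.edges} := by
  intro u v w₁ w₂ h₁ h₂
  by_contra hne
  -- some edge is in one cycle but not the other
  have hex : ∃ e, (e ∈ w₁.edges ∧ e ∉ w₂.edges) ∨ (e ∈ w₂.edges ∧ e ∉ w₁.edges) := by
    by_contra hc
    push_neg at hc
    apply hne
    ext e
    exact ⟨fun he => (hc e).1 he, fun he => (hc e).2 he⟩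
  obtain ⟨e₀, he₀⟩ := hex
  -- a path from u to v
  obtain ⟨p0, hp0⟩ : ∃ p : G.Walk u v, p.IsPath :=
    ⟨((hG.preconnected u v).some.toPath : G.Path u v).1,
      ((hG.preconnected u v).some.toPath : G.Path u v).2⟩
  -- first hit of w₂.support
  obtain ⟨v', hv', q₁, Hq1S, Hq1sup, _, Hq1t⟩ :=
    walk_prefix_to_set (G := G) {x | x ∈ w₂.support} p0 (by simp)
  have hq₁t : q₁.IsTrail := Hq1t hp0.isTrail
  -- from the reversed q₁, first hit of w₁.support
  obtain ⟨u', hu', q₂, Hq2S, Hq2sup, _, Hq2t⟩ :=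
    walk_prefix_to_set (G := G) {x | x ∈ w₁.support} q₁.reverse (by simp)
  have hq₂t : q₂.IsTrail := Hq2t (hq₁t.reverse)
  set q : G.Walk u' v' := q₂.reverse with hq
  have hqt : q.IsTrail := hq₂t.reverse
  have hqsup : ∀ x ∈ q.support, x ∈ q₂.support := by
    intro x hx; rwa [hq, Walk.support_reverse, List.mem_reverse] at hx
  -- q meets w₁.support only at u', and w₂.support only at v'
  have hqS1 : ∀ x ∈ q.support, x ∈ w₁.support → x = u' := fun x hx hx1 =>
    Hq2S x (hqsup x hx) hx1
  have hqS2 : ∀ x ∈ q.support, x ∈ w₂.support → x = v' := by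
    intro x hx hx2
    have hx' : x ∈ q₁.reverse.support := Hq2sup x (hqsup x hx)
    rw [Walk.support_reverse, List.mem_reverse] at hx'
    exact Hq1S x hx' hx2
  -- edges of q avoid both cycles
  have hqe1 : ∀ e ∈ q.edges, e ∉ w₁.edges := by
    intro e he hew
    induction e with
    | h x y =>
      have hx := q.fst_mem_support_of_mem_edges he
      have hy := q.snd_mem_support_of_mem_edges he
      have hx1 := w₁.fst_mem_support_of_mem_edges hew
      have hy1 := w₁.snd_mem_support_of_mem_edges hew
      have hxy : x ≠ y := (q.adj_of_mem_edges he).ne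
      exact hxy ((hqS1 x hx hx1).trans (hqS1 y hy hy1).symm)
  have hqe2 : ∀ e ∈ q.edges, e ∉ w₂.edges := by
    intro e he hew
    induction e with
    | h x y =>
      have hx := q.fst_mem_support_of_mem_edges he
      have hy := q.snd_mem_support_of_mem_edges he
      have hx1 := w₂.fst_mem_support_of_mem_edges hew
      have hy1 := w₂.snd_mem_support_of_mem_edges hew
      have hxy : x ≠ y := (q.adj_of_mem_edges he).ne
      exact hxy ((hqS2 x hx hx1).trans (hqS2 y hy hy1).symm)
  -- rotate the cycles to the connection points
  set c₁ : G.Walk u' u' := w₁.rotate u' hu' with hc₁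
  set c₂ : G.Walk v' v' := w₂.rotate v' hv' with hc₂
  have hc₁perm : c₁.edges.Perm w₁.edges := (w₁.rotate_edges u' hu').perm
  have hc₂perm : c₂.edges.Perm w₂.edges := (w₂.rotate_edges v' hv').perm
  have hc₁t : c₁.IsTrail := h₁.isTrail.rotate hu'
  have hc₂t : c₂.IsTrail := h₂.isTrail.rotate hv'
  -- the big walk
  set W : G.Walk u' u' := c₁.append (q.append (c₂.append q.reverse)) with hW
  have hWedges : W.edges = c₁.edges ++ (q.edges ++ (c₂.edges ++ q.edges.reverse)) := by
    simp [hW, Walk.edges_append, Walk.edges_reverse]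
  have hWlen : W.length = w₁.length + (q.length + (w₂.length + q.length)) := by
    have l1 : c₁.length = w₁.length := by
      have := hc₁perm.length_eq
      rwa [Walk.length_edges, Walk.length_edges] at this
    have l2 : c₂.length = w₂.length := by
      have := hc₂perm.length_eq
      rwa [Walk.length_edges, Walk.length_edges] at this
    simp [hW, Walk.length_append, Walk.length_reverse, l1, l2]
  have hcount : ∀ e : Sym2 V,
      W.edges.count e = c₁.edges.count e + (q.edges.count e +
        (c₂.edges.count e + q.edges.count e)) := by
    intro e
    rw [hWedges]
    simp [List.count_append, List.count_reverse]
  apply h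
  refine ⟨u', W, ?_, ?_, ?_, ?_⟩
  · rw [hWlen]; have := h₁.three_le_length; omega
  · rw [hWlen]
    have o1 : ¬ Even w₁.length := cycle_length_odd h h₁
    have o2 : ¬ Even w₂.length := cycle_length_odd h h₂
    rw [Nat.even_iff]
    rw [Nat.not_even_iff] at o1 o2
    omega
  · -- an edge with count exactly 1
    rcases he₀ with ⟨he1, he2⟩ | ⟨he2, he1⟩
    · refine ⟨e₀, ?_, ?_⟩
      · rw [hWedges]; simp [hc₁perm.mem_iff, he1]
      · rw [hcount]
        have hone : c₁.edges.count e₀ = 1 :=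
          hc₁t.count_edges_eq_one (hc₁perm.mem_iff.mpr he1)
        have hq0 : q.edges.count e₀ = 0 :=
          List.count_eq_zero.mpr (fun hmem => hqe1 e₀ hmem he1)
        have hc20 : c₂.edges.count e₀ = 0 :=
          List.count_eq_zero.mpr (fun hmem => he2 (hc₂perm.subset hmem))
        omega
    · refine ⟨e₀, ?_, ?_⟩
      · rw [hWedges]; simp [hc₂perm.mem_iff, he2]
      · rw [hcount]
        have hone : c₂.edges.count e₀ = 1 :=
          hc₂t.count_edges_eq_one (hc₂perm.mem_iff.mpr he2)
        have hq0 : q.edges.count e₀ = 0 :=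
          List.count_eq_zero.mpr (fun hmem => hqe2 e₀ hmem he2)
        have hc10 : c₁.edges.count e₀ = 0 :=
          List.count_eq_zero.mpr (fun hmem => he1 (hc₁perm.subset hmem))
        omega
  · -- every edge has count ≤ 2
    intro e _
    rw [hcount]
    have hb1 : c₁.edges.count e ≤ 1 := hc₁t.count_edges_le_one e
    have hb2 : c₂.edges.count e ≤ 1 := hc₂t.count_edges_le_one e
    have hb3 : q.edges.count e ≤ 1 := hqt.count_edges_le_one e
    by_cases hqmem : e ∈ q.edges
    · have hz1 : c₁.edges.count e = 0 :=
        List.count_eq_zero.mpr (fun hmem => hqe1 e hqmem (hc₁perm.subset hmem))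
      have hz2 : c₂.edges.count e = 0 :=
        List.count_eq_zero.mpr (fun hmem => hqe2 e hqmem (hc₂perm.subset hmem))
      omega
    · have hz : q.edges.count e = 0 := List.count_eq_zero.mpr hqmem
      omega
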